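/- Let n ≥ 1 and let i = (i_0, i_1, …, i_{n−1}) be a sequence of integers with 0 ≤ i_k ≤ max{k, n−k−1} for each k. Then in the spanning subgraph D_i of Q_n whose edge set is the union over k = 0, …, n−1 of the i_k-lexical matchings M^{i_k}_{n,k}, every vertex has degree at most 2, and every connected component is a path along which the Hamming weight increases by exactly 1 in each step; in particular, the components of D_i decompose the vertex set of Q_n into chains each consisting of one vertex per level in an interval of consecutive levels. -/

import Mathlib

/-- The Hamming weight of a bitstring of length `n`, i.e., its number of 1-bits. -/
def wt {n : ℕ} (x : Fin n → Bool) : ℕ := (Finset.univ.filter fun i => x i = true).card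

/-- The `n`-dimensional hypercube: vertices are bitstrings of length `n`, two of which are
adjacent iff they differ in exactly one position. -/
def cube (n : ℕ) : SimpleGraph (Fin n → Bool) where
  Adj x y := hammingDist x y = 1
  symm := by constructor; intro x y h; exact (hammingDist_comm y x).trans h
  loopless := by constructor; intro x h; simp [hammingDist_self] at h
/-- A symmetric chain in the `n`-cube: a path `(x_k, x_{k+1}, …, x_{n−k})` in `cube n`
where `x_i` has Hamming weight `i` for each `k ≤ i ≤ n − k`. -/
def IsSymChain (n : ℕ) (c : List (Fin n → Bool)) : Prop :=
  c ≠ [] ∧ c.Chain' (cube n).Adj ∧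
  ∃ k : ℕ, (∀ (i : ℕ) (h : i < c.length), wt (c.get ⟨i, h⟩) = k + i) ∧
    2 * k + (c.length - 1) = n

/-- A symmetric chain decomposition of the `n`-cube: a collection of symmetric chains
whose vertex sets partition the vertex set. -/
def IsSCD (n : ℕ) (D : Set (List (Fin n → Bool))) : Prop :=
  (∀ c ∈ D, IsSymChain n c) ∧ ∀ x : Fin n → Bool, ∃! c, c ∈ D ∧ x ∈ c

/-- The edges lying on a chain, i.e., the unordered pairs of consecutive entries. -/
def chainEdges {V : Type*} (c : List V) : Set (Sym2 V) :=
  {e | ∃ (i : ℕ) (h : i + 1 < c.length),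
    e = s(c.get ⟨i, Nat.lt_of_succ_lt h⟩, c.get ⟨i + 1, h⟩)}

/-- All edges lying on some chain of the collection `D`. -/
def scdEdges {n : ℕ} (D : Set (List (Fin n → Bool))) : Set (Sym2 (Fin n → Bool)) :=
  ⋃ c ∈ D, chainEdges c

/-- Two chain decompositions are edge-disjoint if no edge lies on a chain of one
and also on a chain of the other. -/
def EdgeDisjointSCD {n : ℕ} (D D' : Set (List (Fin n → Bool))) : Prop :=
  Disjoint (scdEdges D) (scdEdges D')
/-- The number of 1-bits among the first `j` bits of `x` (interpreting a bitstring as a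
lattice path, this determines the height after `j` steps). -/
def onesUpTo {n : ℕ} (x : Fin n → Bool) (j : ℕ) : ℕ :=
  (Finset.univ.filter fun i : Fin n => i.val < j ∧ x i = true).card

/-- The height of the lattice path of `x` after `j` steps: number of 1s minus number of 0s
among the first `j` bits (appended steps beyond the length of `x` being down-steps). -/
def hgt {n : ℕ} (x : Fin n → Bool) (j : ℕ) : ℤ := 2 * (onesUpTo x j : ℤ) - (j : ℤ)

/-- The length of the extended lattice path `x^↑`: if the final height `2·wt x − n` is `≥ −1`,
down-steps are appended until the path ends at height `−1` (total length `2·wt x + 1`);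
otherwise nothing is appended. -/
def extLen {n : ℕ} (x : Fin n → Bool) : ℕ := max n (2 * wt x + 1)

/-- Position `j` (0-indexed) of the extended path `x^↑` is a down-step: either it is a 0-bit
of `x`, or one of the appended down-steps. -/
def isDownStep {n : ℕ} (x : Fin n → Bool) (j : ℕ) : Prop :=
  j < extLen x ∧ ∀ h : j < n, x ⟨j, h⟩ = false

/-- The `i`-lexical matching `M^i_{n,k}` between levels `k` and `k+1` of the `n`-cube, as a
relation: `lexUp n k i x y` holds iff `x` lies in level `k` and `y = M^{i,↑}_{n,k}(x)`, i.e.,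
`y` is obtained from `x` by flipping to 1 the 0-bit at the `i`-th down-step of `x^↑` in the
order of decreasing starting height, ties broken from right to left, counting from 0,
provided this down-step lies within `x`. -/
def lexUp (n k i : ℕ) (x y : Fin n → Bool) : Prop :=
  wt x = k ∧ ∃ d : ℕ, d < n ∧ isDownStep x d ∧
    ({j : ℕ | isDownStep x j ∧ (hgt x d < hgt x j ∨ (hgt x j = hgt x d ∧ d < j))}).ncard = i ∧
    y = fun t : Fin n => if t.val = d then true else x t
namespace LX


variable {n : ℕ}

lemma onesUpTo_zero (x : Fin n → Bool) : onesUpTo x 0 = 0 := by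
  simp [onesUpTo]

lemma hgt_zero (x : Fin n → Bool) : hgt x 0 = 0 := by
  simp [hgt, onesUpTo_zero]

lemma onesUpTo_succ_lt (x : Fin n → Bool) {j : ℕ} (h : j < n) :
    onesUpTo x (j+1) = onesUpTo x j + (if x ⟨j, h⟩ = true then 1 else 0) := by
  classical
  unfold onesUpTo
  have hsplit : (Finset.univ.filter fun i : Fin n => i.val < j + 1 ∧ x i = true)
      = (Finset.univ.filter fun i : Fin n => i.val < j ∧ x i = true)
        ∪ (Finset.univ.filter fun i : Fin n => i = ⟨j, h⟩ ∧ x i = true) := by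
    ext i
    simp only [Finset.mem_filter, Finset.mem_univ, true_and, Finset.mem_union]
    constructor
    · rintro ⟨hlt, hx⟩
      rcases Nat.lt_succ_iff_lt_or_eq.mp hlt with h1 | h1
      · exact Or.inl ⟨h1, hx⟩
      · exact Or.inr ⟨Fin.ext h1, hx⟩
    · rintro (⟨h1, hx⟩ | ⟨h1, hx⟩)
      · exact ⟨Nat.lt_succ_of_lt h1, hx⟩
      · subst h1; exact ⟨Nat.lt_succ_self _, hx⟩
  rw [hsplit, Finset.card_union_of_disjoint]
  · congr 1
    by_cases hx : x ⟨j, h⟩ = true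
    · have : (Finset.univ.filter fun i : Fin n => i = ⟨j, h⟩ ∧ x i = true) = {⟨j, h⟩} := by
        ext i
        simp only [Finset.mem_filter, Finset.mem_univ, true_and, Finset.mem_singleton]
        constructor
        · rintro ⟨h1, _⟩; exact h1
        · rintro rfl; exact ⟨rfl, hx⟩
      simp [this, hx]
    · have : (Finset.univ.filter fun i : Fin n => i = ⟨j, h⟩ ∧ x i = true) = ∅ := by
        ext i
        simp only [Finset.mem_filter, Finset.mem_univ, true_and, Finset.notMem_empty,
          iff_false, not_and]
        rintro rfl; exact hx
      simp [this, hx]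
  · rw [Finset.disjoint_left]
    intro i hi1 hi2
    simp only [Finset.mem_filter, Finset.mem_univ, true_and] at hi1 hi2
    rw [hi2.1] at hi1
    exact absurd hi1.1 (lt_irrefl j)

lemma onesUpTo_congr_ge (x : Fin n → Bool) {j j' : ℕ} (h : n ≤ j) (h' : n ≤ j') :
    onesUpTo x j = onesUpTo x j' := by
  unfold onesUpTo
  congr 1
  ext i
  simp only [Finset.mem_filter, Finset.mem_univ, true_and]
  constructor
  · rintro ⟨_, hx⟩; exact ⟨lt_of_lt_of_le i.isLt h', hx⟩
  · rintro ⟨_, hx⟩; exact ⟨lt_of_lt_of_le i.isLt h, hx⟩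

lemma onesUpTo_of_ge (x : Fin n → Bool) {j : ℕ} (h : n ≤ j) :
    onesUpTo x j = wt x := by
  unfold onesUpTo wt
  congr 1
  ext i
  simp only [Finset.mem_filter, Finset.mem_univ, true_and, and_iff_right_iff_imp]
  exact fun _ => lt_of_lt_of_le i.isLt h

lemma hgt_succ_up (x : Fin n → Bool) {j : ℕ} (h : j < n) (hx : x ⟨j, h⟩ = true) :
    hgt x (j+1) = hgt x j + 1 := by
  unfold hgt
  rw [onesUpTo_succ_lt x h, hx]
  simp only [if_pos rfl]
  push_cast
  ring

lemma hgt_succ_down (x : Fin n → Bool) {j : ℕ} (hx : ∀ h : j < n, x ⟨j, h⟩ = false) :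
    hgt x (j+1) = hgt x j - 1 := by
  unfold hgt
  by_cases h : j < n
  · rw [onesUpTo_succ_lt x h, hx h]
    simp only [Bool.false_eq_true, if_false]
    push_cast
    ring
  · rw [onesUpTo_congr_ge x (by omega : n ≤ j + 1) (le_of_not_gt h)]
    push_cast
    ring

lemma hgt_succ_cases (x : Fin n → Bool) (j : ℕ) :
    hgt x (j+1) = hgt x j + 1 ∨ hgt x (j+1) = hgt x j - 1 := by
  by_cases h : j < n
  · cases hx : x ⟨j, h⟩
    · exact Or.inr (hgt_succ_down x (fun h' => hx))
    · exact Or.inl (hgt_succ_up x h hx)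
  · exact Or.inr (hgt_succ_down x (fun h' => absurd h' h))

lemma hgt_extLen (x : Fin n → Bool) : hgt x (extLen x) ≤ -1 := by
  unfold hgt
  have hnl : n ≤ extLen x := by unfold extLen; exact le_max_left _ _
  rw [onesUpTo_of_ge x hnl]
  have h1 : (2 * wt x + 1 : ℕ) ≤ extLen x := by unfold extLen; exact le_max_right _ _
  have h2 : ((2 * wt x + 1 : ℕ) : ℤ) ≤ (extLen x : ℤ) := by exact_mod_cast h1
  push_cast at h2 ⊢
  omega

lemma exists_cross (x : Fin n → Bool) {a b : ℕ} {h : ℤ} (hab : a ≤ b)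
    (ha : h ≤ hgt x a) (hb : hgt x b < h) :
    ∃ j, a ≤ j ∧ j < b ∧ hgt x j = h ∧ hgt x (j+1) = h - 1 := by
  induction b with
  | zero =>
    exact absurd (le_antisymm hab (Nat.zero_le a) ▸ ha) (not_le.mpr hb)
  | succ b ih =>
    by_cases hba : a ≤ b
    · by_cases hhb : hgt x b < h
      · obtain ⟨j, h1, h2, h3, h4⟩ := ih hba hhb
        exact ⟨j, h1, Nat.lt_succ_of_lt h2, h3, h4⟩
      · push_neg at hhb
        rcases hgt_succ_cases x b with hc | hc
        · omega
        · exact ⟨b, hba, Nat.lt_succ_self _, by omega, by omega⟩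
    · have : a = b + 1 := by omega
      subst this
      omega

lemma down_of_drop (x : Fin n → Bool) {j : ℕ} (hj : j < extLen x)
    (hd : hgt x (j+1) = hgt x j - 1) : isDownStep x j := by
  refine ⟨hj, fun h => ?_⟩
  cases hx : x ⟨j, h⟩
  · rfl
  · have := hgt_succ_up x h hx
    omega

lemma hgt_le_of_ge_n (x : Fin n → Bool) {j : ℕ} (h : n ≤ j) : hgt x j = 2 * (wt x : ℤ) - j := by
  unfold hgt
  rw [onesUpTo_of_ge x h]



variable {n : ℕ}

lemma n_le_extLen (x : Fin n → Bool) : n ≤ extLen x := by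
  unfold extLen; exact le_max_left _ _

lemma wt_flip (x y : Fin n → Bool) {d : ℕ} (hd : d < n) (hxd : x ⟨d, hd⟩ = false)
    (hy : y = fun t : Fin n => if t.val = d then true else x t) : wt y = wt x + 1 := by
  classical
  subst hy
  unfold wt
  have : (Finset.univ.filter fun i : Fin n =>
        (if i.val = d then true else x i) = true)
      = insert ⟨d, hd⟩ (Finset.univ.filter fun i : Fin n => x i = true) := by
    ext i
    simp only [Finset.mem_filter, Finset.mem_univ, true_and, Finset.mem_insert]
    by_cases hi : i.val = d
    · have : i = ⟨d, hd⟩ := Fin.ext hi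
      simp [this]
    · have : i ≠ ⟨d, hd⟩ := fun hc => hi (by rw [hc])
      simp [hi, this]
  rw [this, Finset.card_insert_of_notMem]
  simp only [Finset.mem_filter, Finset.mem_univ, true_and]
  rw [hxd]
  simp

lemma onesUpTo_flip (x y : Fin n → Bool) {d : ℕ} (hd : d < n) (hxd : x ⟨d, hd⟩ = false)
    (hy : y = fun t : Fin n => if t.val = d then true else x t) (j : ℕ) :
    onesUpTo y j = onesUpTo x j + (if d < j then 1 else 0) := by
  classical
  subst hy
  unfold onesUpTo
  by_cases hdj : d < j
  · have : (Finset.univ.filter fun i : Fin n =>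
          i.val < j ∧ (if i.val = d then true else x i) = true)
        = insert ⟨d, hd⟩ (Finset.univ.filter fun i : Fin n => i.val < j ∧ x i = true) := by
      ext i
      simp only [Finset.mem_filter, Finset.mem_univ, true_and, Finset.mem_insert]
      by_cases hi : i.val = d
      · have : i = ⟨d, hd⟩ := Fin.ext hi
        simp [this, hdj]
      · have : i ≠ ⟨d, hd⟩ := fun hc => hi (by rw [hc])
        simp [hi, this]
    rw [this, Finset.card_insert_of_notMem]
    · simp [hdj]
    · simp only [Finset.mem_filter, Finset.mem_univ, true_and]
      rw [hxd]
      simp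
  · have : (Finset.univ.filter fun i : Fin n =>
          i.val < j ∧ (if i.val = d then true else x i) = true)
        = Finset.univ.filter fun i : Fin n => i.val < j ∧ x i = true := by
      ext i
      simp only [Finset.mem_filter, Finset.mem_univ, true_and]
      by_cases hi : i.val = d
      · constructor
        · rintro ⟨h1, _⟩; omega
        · rintro ⟨h1, _⟩; omega
      · simp [hi]
    rw [this]
    simp [hdj]

lemma hgt_flip (x y : Fin n → Bool) {d : ℕ} (hd : d < n) (hxd : x ⟨d, hd⟩ = false)
    (hy : y = fun t : Fin n => if t.val = d then true else x t) (j : ℕ) :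
    hgt y j = hgt x j + (if d < j then 2 else 0) := by
  unfold hgt
  rw [onesUpTo_flip x y hd hxd hy j]
  by_cases hdj : d < j <;> simp [hdj] <;> push_cast <;> ring

lemma x_eq_of_flip (x y : Fin n → Bool) {d : ℕ} (hd : d < n) (hxd : x ⟨d, hd⟩ = false)
    (hy : y = fun t : Fin n => if t.val = d then true else x t) :
    x = fun t : Fin n => if t.val = d then false else y t := by
  funext t
  by_cases ht : t.val = d
  · have : t = ⟨d, hd⟩ := Fin.ext ht
    rw [this, if_pos rfl, hxd]
  · rw [if_neg ht, hy]
    simp [ht]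

/-- The rank set of a down-step `e` of `x`. -/
def rset (x : Fin n → Bool) (e : ℕ) : Set ℕ :=
  {j : ℕ | isDownStep x j ∧ (hgt x e < hgt x j ∨ (hgt x j = hgt x e ∧ e < j))}

lemma rset_finite (x : Fin n → Bool) (e : ℕ) : (rset x e).Finite :=
  Set.Finite.subset (Set.finite_Iio (extLen x)) (fun _ hj => hj.1.1)

/-- Forward strict monotonicity: if `a` is an earlier down-step than `b`, then the rank set
of `a` is a proper subset of that of `b`. -/
lemma rset_ssubset_of_prec (x : Fin n → Bool) {a b : ℕ} (ha : isDownStep x a)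
    (hprec : hgt x b < hgt x a ∨ (hgt x a = hgt x b ∧ b < a)) :
    rset x a ⊂ rset x b := by
  rw [Set.ssubset_iff_of_subset]
  · exact ⟨a, ⟨ha, hprec⟩, fun hc => by
      obtain ⟨_, hord⟩ := hc
      omega⟩
  · rintro j ⟨hdj, hord⟩
    exact ⟨hdj, by omega⟩

/-- Backward strict monotonicity: if `d'` is dual-earlier than `d` among the up-steps of `y`,
then the rank set of `d'` in `x' = y - d'` is a proper subset of that of `d` in `x = y - d`. -/
lemma rset_ssubset_dual (x x' y : Fin n → Bool) {d d' : ℕ} (hd : d < n) (hd' : d' < n)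
    (hxd : x ⟨d, hd⟩ = false) (hx'd' : x' ⟨d', hd'⟩ = false)
    (hy : y = fun t : Fin n => if t.val = d then true else x t)
    (hy' : y = fun t : Fin n => if t.val = d' then true else x' t)
    (hne : d ≠ d')
    (hdual : hgt y d < hgt y d' ∨ (hgt y d' = hgt y d ∧ d' < d)) :
    rset x' d' ⊂ rset x d := by
  have hyd : y ⟨d, hd⟩ = true := by rw [hy]; simp
  have hyd' : y ⟨d', hd'⟩ = true := by rw [hy']; simp
  have hxd' : x ⟨d', hd'⟩ = true := by
    have h0 := congrFun hy ⟨d', hd'⟩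
    rw [if_neg (by simpa using Ne.symm hne)] at h0
    rw [← h0]; exact hyd' 
  have hwt : wt x = wt x' := by
    have h1 := wt_flip x y hd hxd hy
    have h2 := wt_flip x' y hd' hx'd' hy'
    omega
  have hext : extLen x = extLen x' := by unfold extLen; rw [hwt]
  have hhx : ∀ j, hgt y j = hgt x j + (if d < j then 2 else 0) :=
    hgt_flip x y hd hxd hy
  have hhx' : ∀ j, hgt y j = hgt x' j + (if d' < j then 2 else 0) :=
    hgt_flip x' y hd' hx'd' hy'
  have hpx : hgt x d = hgt y d := by rw [hhx d]; simp
  have hpx' : hgt x' d' = hgt y d' := by rw [hhx' d']; simp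
  have hyd'1 : hgt y (d'+1) = hgt y d' + 1 := hgt_succ_up y hd' hyd'
  have hsub : rset x' d' ⊆ rset x d := by
    rintro j ⟨⟨hjl, hjb⟩, hord⟩
    have hjd' : j ≠ d' := by
      rintro rfl
      omega
    refine ⟨⟨?_, ?_⟩, ?_⟩
    · rw [hext]; exact hjl
    · intro hjn
      by_cases hjd : j = d
      · subst hjd; exact hxd
      · have h0 := congrFun hy ⟨j, hjn⟩
        rw [if_neg (by simpa using hjd)] at h0
        have h1 := congrFun hy' ⟨j, hjn⟩
        rw [if_neg (by simpa using hjd')] at h1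
        rw [← h0, h1]
        exact hjb hjn
    · have e1 := hhx j
      have e2 := hhx' j
      rw [hpx'] at hord
      rw [hpx]
      by_cases hdj : d < j <;> by_cases hd'j : d' < j <;>
        simp only [hdj, hd'j, if_true, if_false] at e1 e2 <;>
        omega
  rw [Set.ssubset_iff_of_subset hsub]
  rcases hdual with hlt | ⟨heq, hdd⟩
  · rcases Nat.lt_or_ge d' d with hb1 | hb2
    · -- d' < d, hgt y d < hgt y d'
      have ha : hgt y d' + 1 ≤ hgt x (d'+1) := by
        have e := hhx (d'+1)
        rw [if_neg (by omega : ¬ d < d'+1)] at e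
        omega
      have hb : hgt x d < hgt y d' + 1 := by rw [hpx]; omega
      obtain ⟨j1, h1, h2, h3, h4⟩ := exists_cross x (by omega : d'+1 ≤ d) ha hb
      refine ⟨j1, ⟨down_of_drop x (by have := n_le_extLen x; omega) (by omega),
        Or.inl (by omega)⟩, ?_⟩
      rintro ⟨-, hord⟩
      have e := hhx' j1
      rw [if_pos (by omega : d' < j1)] at e
      have e2 := hhx j1
      rw [if_neg (by omega : ¬ d < j1)] at e2
      rw [hpx'] at hord
      omega
    · -- d < d', hgt y d < hgt y d'
      have hdd' : d < d' := by omega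
      by_cases hh : 0 ≤ hgt y d
      · have ha : hgt y d ≤ hgt x (d'+1) := by
          have e := hhx (d'+1)
          rw [if_pos (by omega : d < d'+1)] at e
          omega
        have hb : hgt x (extLen x) < hgt y d := lt_of_le_of_lt (hgt_extLen x) (by omega)
        obtain ⟨j1, h1, h2, h3, h4⟩ := exists_cross x
          (show d'+1 ≤ extLen x by have := n_le_extLen x; omega) ha hb
        refine ⟨j1, ⟨down_of_drop x h2 (by omega), Or.inr ⟨by omega, by omega⟩⟩, ?_⟩
        rintro ⟨-, hord⟩
        have e := hhx' j1
        rw [if_pos (by omega : d' < j1)] at e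
        have e2 := hhx j1
        rw [if_pos (by omega : d < j1)] at e2
        rw [hpx'] at hord
        omega
      · push_neg at hh
        have ha : hgt y d + 1 ≤ hgt x 0 := by rw [hgt_zero]; omega
        have hb : hgt x d < hgt y d + 1 := by rw [hpx]; omega
        obtain ⟨j1, h1, h2, h3, h4⟩ := exists_cross x (Nat.zero_le d) ha hb
        refine ⟨j1, ⟨down_of_drop x (by have := n_le_extLen x; omega) (by omega),
          Or.inl (by omega)⟩, ?_⟩
        rintro ⟨-, hord⟩
        have e := hhx' j1
        rw [if_neg (by omega : ¬ d' < j1)] at e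
        have e2 := hhx j1
        rw [if_neg (by omega : ¬ d < j1)] at e2
        rw [hpx'] at hord
        omega
  · -- tie: hgt y d' = hgt y d, d' < d
    have ha : hgt y d + 1 ≤ hgt x (d'+1) := by
      have e := hhx (d'+1)
      rw [if_neg (by omega : ¬ d < d'+1)] at e
      omega
    have hb : hgt x d < hgt y d + 1 := by rw [hpx]; omega
    obtain ⟨j1, h1, h2, h3, h4⟩ := exists_cross x (by omega : d'+1 ≤ d) ha hb
    refine ⟨j1, ⟨down_of_drop x (by have := n_le_extLen x; omega) (by omega),
      Or.inl (by omega)⟩, ?_⟩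
    rintro ⟨-, hord⟩
    have e := hhx' j1
    rw [if_pos (by omega : d' < j1)] at e
    have e2 := hhx j1
    rw [if_neg (by omega : ¬ d < j1)] at e2
    rw [hpx'] at hord
    omega



variable {n : ℕ}

lemma lexUp_wt_succ {k i : ℕ} {x y : Fin n → Bool} (h : lexUp n k i x y) :
    wt y = wt x + 1 := by
  obtain ⟨-, d, hdn, hdown, -, hy⟩ := h
  exact wt_flip x y hdn (hdown.2 hdn) hy

lemma lexUp_hamming {k i : ℕ} {x y : Fin n → Bool} (h : lexUp n k i x y) :
    hammingDist x y = 1 := by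
  classical
  obtain ⟨-, d, hdn, hdown, -, hy⟩ := h
  have hxd := hdown.2 hdn
  unfold hammingDist
  have : ({i : Fin n | x i ≠ y i} : Finset (Fin n)) = {⟨d, hdn⟩} := by
    ext i
    simp only [Finset.mem_filter, Finset.mem_univ, true_and, Finset.mem_singleton,
      Set.mem_setOf_eq]
    by_cases hi : i.val = d
    · have hieq : i = ⟨d, hdn⟩ := Fin.ext hi
      subst hieq
      have : y ⟨d, hdn⟩ = true := by rw [hy]; simp
      simp [this, hxd]
    · have : y i = x i := by rw [hy]; simp [hi]
      simp only [this, ne_eq, not_true_eq_false, false_iff]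
      exact fun hc : i = ⟨d, hdn⟩ => hi (by rw [hc])
  rw [this]
  simp

lemma lexUp_unique_up {k i : ℕ} {x y y' : Fin n → Bool} (h : lexUp n k i x y)
    (h' : lexUp n k i x y') : y = y' := by
  obtain ⟨-, d, hdn, hdown, hcard, hy⟩ := h
  obtain ⟨-, d', hdn', hdown', hcard', hy'⟩ := h'
  by_cases hdd : d = d'
  · subst hdd; rw [hy, hy']
  · exfalso
    have hc1 : (rset x d).ncard = i := hcard
    have hc2 : (rset x d').ncard = i := hcard'
    have tri : (hgt x d' < hgt x d ∨ (hgt x d = hgt x d' ∧ d' < d)) ∨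
        (hgt x d < hgt x d' ∨ (hgt x d' = hgt x d ∧ d < d')) := by omega
    rcases tri with ht | ht
    · have := Set.ncard_lt_ncard (rset_ssubset_of_prec x hdown ht) (rset_finite x d')
      omega
    · have := Set.ncard_lt_ncard (rset_ssubset_of_prec x hdown' ht) (rset_finite x d)
      omega

lemma lexUp_unique_down {k i : ℕ} {x x' y : Fin n → Bool} (h : lexUp n k i x y)
    (h' : lexUp n k i x' y) : x = x' := by
  obtain ⟨hw, d, hdn, hdown, hcard, hy⟩ := h
  obtain ⟨hw', d', hdn', hdown', hcard', hy'⟩ := h'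
  have hxd := hdown.2 hdn
  have hx'd' := hdown'.2 hdn'
  by_cases hdd : d = d'
  · subst hdd
    rw [x_eq_of_flip x y hdn hxd hy, x_eq_of_flip x' y hdn hx'd' hy']
  · exfalso
    have hc1 : (rset x d).ncard = i := hcard
    have hc2 : (rset x' d').ncard = i := hcard'
    have tri : (hgt y d < hgt y d' ∨ (hgt y d' = hgt y d ∧ d' < d)) ∨
        (hgt y d' < hgt y d ∨ (hgt y d = hgt y d' ∧ d < d')) := by omega
    rcases tri with ht | ht
    · have hss := rset_ssubset_dual x x' y hdn hdn' hxd hx'd' hy hy' hdd ht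
      have := Set.ncard_lt_ncard hss (rset_finite x d)
      omega
    · have hss := rset_ssubset_dual x' x y hdn' hdn hx'd' hxd hy' hy (Ne.symm hdd) ht
      have := Set.ncard_lt_ncard hss (rset_finite x' d')
      omega



/-- The union of the lexical matchings, as a relation. -/
def Rel (n : ℕ) (iv : Fin n → ℕ) (x y : Fin n → Bool) : Prop :=
  ∃ k : Fin n, lexUp n k.val (iv k) x y

attribute [local instance] Classical.propDecidable

variable {n : ℕ} {iv : Fin n → ℕ}

lemma rel_wt_lt {x y : Fin n → Bool} (h : Rel n iv x y) : wt x < n := by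
  obtain ⟨k, hk⟩ := h
  rw [hk.1]
  exact k.isLt

lemma rel_wt_succ {x y : Fin n → Bool} (h : Rel n iv x y) : wt y = wt x + 1 := by
  obtain ⟨k, hk⟩ := h
  exact lexUp_wt_succ hk

lemma rel_adj {x y : Fin n → Bool} (h : Rel n iv x y) : (cube n).Adj x y := by
  obtain ⟨k, hk⟩ := h
  exact lexUp_hamming hk

lemma rel_up_unique {x y y' : Fin n → Bool} (h : Rel n iv x y) (h' : Rel n iv x y') :
    y = y' := by
  obtain ⟨k, hk⟩ := h
  obtain ⟨k', hk'⟩ := h'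
  have : k = k' := Fin.ext (hk.1.symm.trans hk'.1)
  subst this
  exact lexUp_unique_up hk hk'

lemma rel_down_unique {x x' y : Fin n → Bool} (h : Rel n iv x y) (h' : Rel n iv x' y) :
    x = x' := by
  obtain ⟨k, hk⟩ := h
  obtain ⟨k', hk'⟩ := h'
  have hwx : wt y = k.val + 1 := by rw [lexUp_wt_succ hk, hk.1]
  have hwx' : wt y = k'.val + 1 := by rw [lexUp_wt_succ hk', hk'.1]
  have : k = k' := Fin.ext (by omega)
  subst this
  exact lexUp_unique_down hk hk'

/-- The chain upwards from `x` following the union of lexical matchings. -/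
noncomputable def chainFrom (n : ℕ) (iv : Fin n → ℕ) (x : Fin n → Bool) :
    List (Fin n → Bool) :=
  x :: (if h : ∃ y, Rel n iv x y then chainFrom n iv h.choose else [])
termination_by n - wt x
decreasing_by
  have h1 := rel_wt_succ h.choose_spec
  have h2 := rel_wt_lt h.choose_spec
  omega

lemma chainFrom_eq (x : Fin n → Bool) : chainFrom n iv x
    = x :: (if h : ∃ y, Rel n iv x y then chainFrom n iv h.choose else []) := by
  rw [chainFrom]

/-- The root of the chain through `x`. -/
noncomputable def root (n : ℕ) (iv : Fin n → ℕ) (x : Fin n → Bool) : Fin n → Bool :=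
  if h : ∃ w, Rel n iv w x then root n iv h.choose else x
termination_by wt x
decreasing_by
  have h1 := rel_wt_succ h.choose_spec
  omega

lemma root_eq (x : Fin n → Bool) : root n iv x
    = if h : ∃ w, Rel n iv w x then root n iv h.choose else x := by
  rw [root]

lemma root_of_rel {w x : Fin n → Bool} (hw : Rel n iv w x) :
    root n iv x = root n iv w := by
  have hex : ∃ w', Rel n iv w' x := ⟨w, hw⟩
  rw [root_eq x, dif_pos hex, rel_down_unique hex.choose_spec hw]

lemma root_no_pred (x : Fin n → Bool) : ¬ ∃ w, Rel n iv w (root n iv x) := by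
  by_cases hex : ∃ w, Rel n iv w x
  · rw [root_eq x, dif_pos hex]
    exact root_no_pred hex.choose
  · rw [root_eq x, dif_neg hex]
    exact hex
termination_by wt x
decreasing_by
  have h1 := rel_wt_succ hex.choose_spec
  omega

lemma root_eq_self {x : Fin n → Bool} (hx : ¬ ∃ w, Rel n iv w x) : root n iv x = x := by
  rw [root_eq x, dif_neg hx]

lemma mem_chainFrom_self (x : Fin n → Bool) : x ∈ chainFrom n iv x := by
  rw [chainFrom_eq]
  exact List.mem_cons_self

lemma mem_step {z w y : Fin n → Bool} (hw : w ∈ chainFrom n iv z) (hr : Rel n iv w y) :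
    y ∈ chainFrom n iv z := by
  rw [chainFrom_eq] at hw
  rcases List.mem_cons.mp hw with rfl | hm
  · have hex : ∃ y', Rel n iv w y' := ⟨y, hr⟩
    rw [chainFrom_eq, dif_pos hex]
    have : hex.choose = y := rel_up_unique hex.choose_spec hr
    rw [← this]
    exact List.mem_cons_of_mem _ (mem_chainFrom_self _)
  · by_cases hex : ∃ y', Rel n iv z y'
    · rw [dif_pos hex] at hm
      have hrec := mem_step hm hr
      rw [chainFrom_eq, dif_pos hex]
      exact List.mem_cons_of_mem _ hrec
    · rw [dif_neg hex] at hm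
      exact absurd hm List.not_mem_nil
termination_by n - wt z
decreasing_by
  have h1 := rel_wt_succ hex.choose_spec
  have h2 := rel_wt_lt hex.choose_spec
  omega

lemma root_of_mem {z x : Fin n → Bool} (hx : x ∈ chainFrom n iv z) :
    root n iv x = root n iv z := by
  rw [chainFrom_eq] at hx
  rcases List.mem_cons.mp hx with rfl | hm
  · rfl
  · by_cases hex : ∃ y', Rel n iv z y'
    · rw [dif_pos hex] at hm
      have hrec := root_of_mem hm
      rw [hrec, root_of_rel hex.choose_spec]
    · rw [dif_neg hex] at hm
      exact absurd hm List.not_mem_nil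
termination_by n - wt z
decreasing_by
  have h1 := rel_wt_succ hex.choose_spec
  have h2 := rel_wt_lt hex.choose_spec
  omega

lemma mem_chainFrom_root (x : Fin n → Bool) : x ∈ chainFrom n iv (root n iv x) := by
  by_cases hex : ∃ w, Rel n iv w x
  · rw [root_of_rel hex.choose_spec]
    exact mem_step (mem_chainFrom_root hex.choose) hex.choose_spec
  · rw [root_eq_self hex]
    exact mem_chainFrom_self x
termination_by wt x
decreasing_by
  have h1 := rel_wt_succ hex.choose_spec
  omega

lemma chainFrom_chain' (z : Fin n → Bool) :
    (chainFrom n iv z).Chain' (cube n).Adj := by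
  rw [chainFrom_eq]
  by_cases hex : ∃ y, Rel n iv z y
  · rw [dif_pos hex]
    unfold List.Chain'; rw [List.isChain_cons]
    refine ⟨?_, chainFrom_chain' hex.choose⟩
    intro y hy
    rw [chainFrom_eq] at hy
    simp only [List.head?_cons, Option.mem_def, Option.some.injEq] at hy
    rw [← hy]
    exact rel_adj hex.choose_spec
  · rw [dif_neg hex]
    simp [List.Chain']
termination_by n - wt z
decreasing_by
  have h1 := rel_wt_succ hex.choose_spec
  have h2 := rel_wt_lt hex.choose_spec
  omega

lemma chainEdges_cons {V : Type*} {e : Sym2 V} {l : List V} (a : V)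
    (he : e ∈ chainEdges l) : e ∈ chainEdges (a :: l) := by
  obtain ⟨i, hi, rfl⟩ := he
  exact ⟨i + 1, by simpa using Nat.succ_lt_succ hi, by simp⟩


lemma chainFrom_cases (z : Fin n → Bool) :
    (chainFrom n iv z = [z] ∧ ¬∃ y, Rel n iv z y) ∨
    (∃ y, Rel n iv z y ∧ chainFrom n iv z = z :: chainFrom n iv y) := by
  by_cases hex : ∃ y, Rel n iv z y
  · exact Or.inr ⟨hex.choose, hex.choose_spec, by rw [chainFrom_eq, dif_pos hex]⟩
  · exact Or.inl ⟨by rw [chainFrom_eq, dif_neg hex], hex⟩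

lemma chainFrom_length_pos (z : Fin n → Bool) : 0 < (chainFrom n iv z).length := by
  rw [chainFrom_eq]
  exact Nat.succ_pos _

lemma chainFrom_head (z : Fin n → Bool) (h0 : 0 < (chainFrom n iv z).length) :
    (chainFrom n iv z).get ⟨0, h0⟩ = z := by
  revert h0
  rw [chainFrom_eq]
  intro h0
  rfl

lemma chainFrom_get (t : ℕ) (z : Fin n → Bool) (h : t < (chainFrom n iv z).length) :
    wt ((chainFrom n iv z).get ⟨t, h⟩) = wt z + t := by
  rcases chainFrom_cases (iv := iv) z with ⟨hc, -⟩ | ⟨y, hy, hc⟩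
  · revert h
    rw [hc]
    intro h
    have ht : t = 0 := by simpa using Nat.lt_one_iff.mp (by simpa using h)
    subst ht
    simp
  · revert h
    rw [hc]
    intro h
    match t with
    | 0 => simp
    | (t'+1) =>
      rw [List.get_cons_succ]
      rw [chainFrom_get t' y (by simpa using h)]
      have := rel_wt_succ hy
      omega
termination_by n - wt z
decreasing_by
  have h1 := rel_wt_succ hy
  have h2 := rel_wt_lt hy
  omega

lemma chainFrom_edge {z w y : Fin n → Bool} (hw : w ∈ chainFrom n iv z)
    (hr : Rel n iv w y) : s(w, y) ∈ chainEdges (chainFrom n iv z) := by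
  rcases chainFrom_cases (iv := iv) z with ⟨hc, hno⟩ | ⟨u, hu, hc⟩
  · rw [hc] at hw
    have : w = z := by simpa using hw
    subst this
    exact absurd ⟨y, hr⟩ hno
  · rw [hc] at hw ⊢
    rcases List.mem_cons.mp hw with rfl | hm
    · have huy : u = y := rel_up_unique hu hr
      subst huy
      refine ⟨0, by simpa using Nat.succ_lt_succ (chainFrom_length_pos u), ?_⟩
      rw [List.get_cons_succ, chainFrom_head]
      rfl
    · exact chainEdges_cons z (chainFrom_edge hm hr)
termination_by n - wt z
decreasing_by
  have h1 := rel_wt_succ hu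
  have h2 := rel_wt_lt hu
  omega

lemma chainFrom_consec (z : Fin n → Bool) (t : ℕ)
    (h : t + 1 < (chainFrom n iv z).length) :
    Rel n iv ((chainFrom n iv z).get ⟨t, Nat.lt_of_succ_lt h⟩)
      ((chainFrom n iv z).get ⟨t + 1, h⟩) := by
  rcases chainFrom_cases (iv := iv) z with ⟨hc, -⟩ | ⟨y, hy, hc⟩
  · exfalso
    revert h
    rw [hc]
    intro h
    simp at h
  · revert h
    rw [hc]
    intro h
    match t with
    | 0 =>
      rw [List.get_cons_succ, chainFrom_head]
      exact hy
    | (t'+1) =>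
      rw [List.get_cons_succ, List.get_cons_succ]
      exact chainFrom_consec y t' (by simpa using h)
termination_by n - wt z
decreasing_by
  have h1 := rel_wt_succ hy
  have h2 := rel_wt_lt hy
  omega

end LX

/-- For a sequence `i = (i_0, …, i_{n−1})` with `0 ≤ i_k ≤ max{k, n−k−1}`, in the spanning
subgraph `D_i` of the `n`-cube with edge set `⋃_{k=0}^{n−1} M^{i_k}_{n,k}` every vertex has
degree at most 2, and the components decompose the vertex set into chains: there is a
partition of the vertices into nonempty paths along which the Hamming weight increases by
exactly 1 in each step, whose edges are exactly the edges of `D_i`. -/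
theorem lexical_union_is_chain_decomposition (n : ℕ) (hn : 1 ≤ n) (iv : Fin n → ℕ)
    (hb : ∀ k : Fin n, iv k ≤ max k.val (n - k.val - 1)) :
    (∀ v : Fin n → Bool,
      ((SimpleGraph.fromRel fun x y : Fin n → Bool =>
        ∃ k : Fin n, lexUp n k.val (iv k) x y).neighborSet v).ncard ≤ 2) ∧
    ∃ D : Set (List (Fin n → Bool)),
      (∀ c ∈ D, c ≠ [] ∧ c.Chain' (cube n).Adj ∧
        ∃ a : ℕ, ∀ (t : ℕ) (h : t < c.length), wt (c.get ⟨t, h⟩) = a + t) ∧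
      (∀ x : Fin n → Bool, ∃! c, c ∈ D ∧ x ∈ c) ∧
      (⋃ c ∈ D, chainEdges c) = {e : Sym2 (Fin n → Bool) |
        ∃ (k : Fin n) (x y : Fin n → Bool), lexUp n k.val (iv k) x y ∧ e = s(x, y)} := by
  classical
  constructor
  · intro v
    obtain ⟨a, ha⟩ : ∃ a, ∀ w, LX.Rel n iv v w → w = a := by
      by_cases hu : ∃ y, LX.Rel n iv v y
      · exact ⟨hu.choose, fun w hw => LX.rel_up_unique hw hu.choose_spec⟩
      · exact ⟨v, fun w hw => absurd ⟨w, hw⟩ hu⟩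
    obtain ⟨b, hbu⟩ : ∃ b, ∀ w, LX.Rel n iv w v → w = b := by
      by_cases hu : ∃ y, LX.Rel n iv y v
      · exact ⟨hu.choose, fun w hw => LX.rel_down_unique hw hu.choose_spec⟩
      · exact ⟨v, fun w hw => absurd ⟨w, hw⟩ hu⟩
    have hsub : ((SimpleGraph.fromRel fun x y : Fin n → Bool =>
        ∃ k : Fin n, lexUp n k.val (iv k) x y).neighborSet v) ⊆ ({a, b} : Set _) := by
      intro w hw
      rw [SimpleGraph.mem_neighborSet, SimpleGraph.fromRel_adj] at hw
      rcases hw.2 with h | h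
      · exact Or.inl (ha w h)
      · exact Or.inr (hbu w h)
    refine le_trans (Set.ncard_le_ncard hsub (Set.toFinite _)) ?_
    refine le_trans (Set.ncard_insert_le _ _) ?_
    simp
  · refine ⟨Set.range (fun z => LX.chainFrom n iv (LX.root n iv z)), ?_, ?_, ?_⟩
    · rintro c ⟨z, rfl⟩
      refine ⟨?_, ?_, wt (LX.root n iv z), fun t h => ?_⟩
      · show LX.chainFrom n iv (LX.root n iv z) ≠ []
        rw [LX.chainFrom_eq]
        exact List.cons_ne_nil _ _
      · exact LX.chainFrom_chain' _
      · exact LX.chainFrom_get t _ h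
    · intro x
      refine ⟨LX.chainFrom n iv (LX.root n iv x), ⟨⟨x, rfl⟩, LX.mem_chainFrom_root x⟩, ?_⟩
      rintro c ⟨⟨z, rfl⟩, hxc⟩
      have h1 : LX.root n iv x = LX.root n iv (LX.root n iv z) := LX.root_of_mem hxc
      have h2 : LX.root n iv (LX.root n iv z) = LX.root n iv z :=
        LX.root_eq_self (LX.root_no_pred z)
      rw [h1, h2]
    · ext e
      simp only [Set.mem_iUnion, Set.mem_setOf_eq, Set.mem_range, exists_prop]
      constructor
      · rintro ⟨c, ⟨z, rfl⟩, he⟩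
        obtain ⟨t, ht, rfl⟩ := he
        obtain ⟨k, hk⟩ := LX.chainFrom_consec (LX.root n iv z) t ht
        exact ⟨k, _, _, hk, rfl⟩
      · rintro ⟨k, x, y, hxy, rfl⟩
        have hr : LX.Rel n iv x y := ⟨k, hxy⟩
        exact ⟨LX.chainFrom n iv (LX.root n iv x), ⟨x, rfl⟩,
          LX.chainFrom_edge (LX.mem_chainFrom_root x) hr⟩
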